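/- (i) For every j, k ∈ {−,+} and every α ∈ ℤ²: 𝔾^ε_{(j,α),(k,α)} = δ_{jk}. (ii) For every m ∈ ℕ there exists C_m > 0 such that for all ε > 0, all α, β ∈ ℤ² and all j, k ∈ {−,+}: ⟨α − β⟩^m · |𝔾^ε_{(j,α),(k,β)} − δ_{αβ}·δ_{jk}| ≤ C_m · ε, where ⟨v⟩ := (1 + ‖v‖²)^{1/2}. -/

import Mathlib

open MeasureTheory

private lemma aux_exp_sub_one (t : ℝ) : ‖Complex.exp (t * Complex.I) - 1‖ ≤ 2 * |t| := by
  rcases le_or_gt (|t|) 1 with h | h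
  · have := Complex.norm_exp_sub_one_le (x := t * Complex.I) (by simpa using h)
    simpa [norm_mul, Complex.norm_I, Complex.norm_real] using this
  · calc ‖Complex.exp (t * Complex.I) - 1‖ ≤ ‖Complex.exp (t * Complex.I)‖ + ‖(1:ℂ)‖ :=
          norm_sub_le _ _
      _ = 2 := by rw [Complex.norm_exp_ofReal_mul_I]; norm_num
      _ ≤ 2 * |t| := by nlinarith

private lemma aux_coord (v : EuclideanSpace ℝ (Fin 2)) (i : Fin 2) : |v i| ≤ ‖v‖ := by
  rw [EuclideanSpace.norm_eq, ← Real.sqrt_sq_eq_abs]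
  apply Real.sqrt_le_sqrt
  have := Finset.single_le_sum (f := fun x => ‖v x‖ ^ 2) (fun i _ => by positivity)
    (Finset.mem_univ i)
  simpa using this

private lemma aux_decay (f : SchwartzMap (EuclideanSpace ℝ (Fin 2)) ℂ) (k : ℕ) :
    ∃ C, 0 ≤ C ∧ ∀ x, (1 + ‖x‖) ^ k * ‖f x‖ ≤ C := by
  have h : ∀ x, (1 + ‖x‖) ^ k * ‖f x‖ ≤
      2 ^ k * (Finset.Iic (k, 0)).sup (fun p => SchwartzMap.seminorm ℝ p.1 p.2) f := by
    intro x
    have := SchwartzMap.one_add_le_sup_seminorm_apply (𝕜 := ℝ) (m := (k, 0)) le_rfl le_rfl f x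
    simpa [norm_iteratedFDeriv_zero] using this
  exact ⟨_, le_trans (by positivity) (h 0), h⟩

private lemma aux_int3 :
    Integrable (fun x : EuclideanSpace ℝ (Fin 2) => ((1 + ‖x‖) ^ 3)⁻¹) := by
  have h := integrable_one_add_norm (E := EuclideanSpace ℝ (Fin 2)) (μ := volume) (r := 3)
    (by rw [finrank_euclideanSpace_fin]; norm_num)
  have e : ∀ x : EuclideanSpace ℝ (Fin 2), (1 + ‖x‖) ^ (-(3:ℝ)) = ((1 + ‖x‖) ^ 3)⁻¹ := by
    intro x
    rw [Real.rpow_neg (by positivity)]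
    norm_num
  simpa [e] using h

set_option maxHeartbeats 1000000 in
theorem stmt18 (b : ℝ) (hb : 0 < b)
    (Ψ : Fin 2 → SchwartzMap (EuclideanSpace ℝ (Fin 2)) ℂ)
    (latt : (Fin 2 → ℤ) → EuclideanSpace ℝ (Fin 2))
    (hlatt : ∀ a i, latt a i = (a i : ℝ))
    (hortho : ∀ (j k : Fin 2) (α β : Fin 2 → ℤ),
      ∫ x : EuclideanSpace ℝ (Fin 2),
          (starRingEnd ℂ) (Ψ j (x - latt α)) * Ψ k (x - latt β)
        = (if j = k then 1 else 0) * (if α = β then 1 else 0))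
    (G : ℝ → Fin 2 → (Fin 2 → ℤ) → Fin 2 → (Fin 2 → ℤ) → ℂ)
    (hG : ∀ (ε : ℝ) (j : Fin 2) (α : Fin 2 → ℤ) (k : Fin 2) (β : Fin 2 → ℤ),
      G ε j α k β =
        Complex.exp (-Complex.I * (ε : ℂ) * ((b / 2 : ℝ) : ℂ) *
            ((latt α 0 * latt β 1 - latt α 1 * latt β 0 : ℝ) : ℂ)) *
          ∫ x : EuclideanSpace ℝ (Fin 2),
            (starRingEnd ℂ) (Ψ j (x - latt α)) *
              Complex.exp (-Complex.I * (ε : ℂ) * ((b / 2 : ℝ) : ℂ) *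
                (((latt α 0 - latt β 0) * (x 1 - latt β 1)
                    - (latt α 1 - latt β 1) * (x 0 - latt β 0) : ℝ) : ℂ)) *
              Ψ k (x - latt β)) :
    (∀ (ε : ℝ) (j k : Fin 2) (α : Fin 2 → ℤ),
      G ε j α k α = if j = k then 1 else 0) ∧
    (∀ m : ℕ, ∃ C > (0 : ℝ), ∀ ε > (0 : ℝ), ∀ (α β : Fin 2 → ℤ) (j k : Fin 2),
      Real.sqrt (1 + ‖latt α - latt β‖ ^ 2) ^ m *
          ‖G ε j α k β - (if j = k then 1 else 0) * (if α = β then 1 else 0)‖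
        ≤ C * ε) := by
  have hI : ∀ (ε : ℝ) (j k : Fin 2) (α : Fin 2 → ℤ),
      G ε j α k α = if j = k then 1 else 0 := by
    intro ε j k α
    have h1 : (latt α 0 * latt α 1 - latt α 1 * latt α 0 : ℝ) = 0 := by ring
    rw [hG, h1]
    simp only [sub_self, zero_mul, Complex.ofReal_zero, mul_zero, Complex.exp_zero, one_mul,
      mul_one]
    rw [hortho j k α α]
    simp
  refine ⟨hI, ?_⟩
  intro m
  obtain ⟨A0, hA0nn, hA0⟩ := aux_decay (Ψ 0) (m + 1)
  obtain ⟨A1, hA1nn, hA1⟩ := aux_decay (Ψ 1) (m + 1)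
  obtain ⟨B0, hB0nn, hB0⟩ := aux_decay (Ψ 0) (m + 5)
  obtain ⟨B1, hB1nn, hB1⟩ := aux_decay (Ψ 1) (m + 5)
  set A := max A0 A1 with hAdef
  set B := max B0 B1 with hBdef
  have hAnn : 0 ≤ A := le_trans hA0nn (le_max_left _ _)
  have hBnn : 0 ≤ B := le_trans hB0nn (le_max_left _ _)
  have hA : ∀ (j : Fin 2) (x : EuclideanSpace ℝ (Fin 2)), (1 + ‖x‖) ^ (m + 1) * ‖Ψ j x‖ ≤ A := by
    intro j x
    fin_cases j
    · exact (hA0 x).trans (le_max_left _ _)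
    · exact (hA1 x).trans (le_max_right _ _)
  have hB : ∀ (k : Fin 2) (x : EuclideanSpace ℝ (Fin 2)), (1 + ‖x‖) ^ (m + 5) * ‖Ψ k x‖ ≤ B := by
    intro k x
    fin_cases k
    · exact (hB0 x).trans (le_max_left _ _)
    · exact (hB1 x).trans (le_max_right _ _)
  set J : ℝ := ∫ x : EuclideanSpace ℝ (Fin 2), ((1 + ‖x‖) ^ 3)⁻¹ with hJdef
  have hJnn : 0 ≤ J := integral_nonneg fun x => by positivity
  have hCnn : 0 ≤ 2 * b * A * B * J :=
    mul_nonneg (mul_nonneg (mul_nonneg (by linarith) hAnn) hBnn) hJnn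
  refine ⟨2 * b * A * B * J + 1, by linarith, ?_⟩
  intro ε hε α β j k
  by_cases hab : α = β
  · subst hab
    rw [hI]
    have h2 : (if α = α then (1:ℂ) else 0) = 1 := if_pos rfl
    rw [h2, mul_one]
    simp only [sub_self, norm_zero, mul_zero]
    exact le_of_lt (mul_pos (by linarith) hε)
  · -- main case

    rw [if_neg hab, mul_zero, sub_zero]
    have h2εb : (0:ℝ) < 2 * ε * b := by nlinarith
    -- bound on the flux coefficient
    have hrb : ∀ x : EuclideanSpace ℝ (Fin 2),
        |(latt α 0 - latt β 0) * (x 1 - latt β 1) - (latt α 1 - latt β 1) * (x 0 - latt β 0)|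
          ≤ 2 * (‖latt α - latt β‖ * ‖x - latt β‖) := by
      intro x
      have h0 : |latt α 0 - latt β 0| ≤ ‖latt α - latt β‖ := aux_coord (latt α - latt β) 0
      have h1 : |latt α 1 - latt β 1| ≤ ‖latt α - latt β‖ := aux_coord (latt α - latt β) 1
      have g0 : |x 0 - latt β 0| ≤ ‖x - latt β‖ := aux_coord (x - latt β) 0
      have g1 : |x 1 - latt β 1| ≤ ‖x - latt β‖ := aux_coord (x - latt β) 1
      have habs : |(latt α 0 - latt β 0) * (x 1 - latt β 1)
            - (latt α 1 - latt β 1) * (x 0 - latt β 0)|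
          ≤ |latt α 0 - latt β 0| * |x 1 - latt β 1|
            + |latt α 1 - latt β 1| * |x 0 - latt β 0| := by
        calc |(latt α 0 - latt β 0) * (x 1 - latt β 1)
              - (latt α 1 - latt β 1) * (x 0 - latt β 0)|
            ≤ |(latt α 0 - latt β 0) * (x 1 - latt β 1)|
              + |(latt α 1 - latt β 1) * (x 0 - latt β 0)| := abs_sub _ _
          _ = _ := by rw [abs_mul, abs_mul]
      have p1 : |latt α 0 - latt β 0| * |x 1 - latt β 1| ≤ ‖latt α - latt β‖ * ‖x - latt β‖ :=
        mul_le_mul h0 g1 (abs_nonneg _) (norm_nonneg _)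
      have p2 : |latt α 1 - latt β 1| * |x 0 - latt β 0| ≤ ‖latt α - latt β‖ * ‖x - latt β‖ :=
        mul_le_mul h1 g0 (abs_nonneg _) (norm_nonneg _)
      linarith
    -- bound on the oscillating factor
    have hEb : ∀ x : EuclideanSpace ℝ (Fin 2),
        ‖Complex.exp (-Complex.I * (ε : ℂ) * ((b / 2 : ℝ) : ℂ) *
          (((latt α 0 - latt β 0) * (x 1 - latt β 1)
              - (latt α 1 - latt β 1) * (x 0 - latt β 0) : ℝ) : ℂ)) - 1‖ ≤ 2 * ε * b * (‖latt α - latt β‖ * ‖x - latt β‖) := by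
      intro x
      have hcast : -Complex.I * (ε : ℂ) * ((b / 2 : ℝ) : ℂ) *
          (((latt α 0 - latt β 0) * (x 1 - latt β 1)
              - (latt α 1 - latt β 1) * (x 0 - latt β 0) : ℝ) : ℂ)
          = ((-(ε * (b / 2) * ((latt α 0 - latt β 0) * (x 1 - latt β 1)
              - (latt α 1 - latt β 1) * (x 0 - latt β 0))) : ℝ) : ℂ) * Complex.I := by
        push_cast; ring
      rw [hcast]
      refine (aux_exp_sub_one _).trans ?_
      rw [abs_neg, abs_mul, abs_mul, abs_of_pos hε, abs_of_pos (by linarith : (0:ℝ) < b / 2)]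
      have hr := hrb x
      have hmul := mul_le_mul_of_nonneg_left hr (by positivity : (0:ℝ) ≤ 2 * (ε * (b / 2)))
      nlinarith [abs_nonneg ((latt α 0 - latt β 0) * (x 1 - latt β 1)
        - (latt α 1 - latt β 1) * (x 0 - latt β 0))]
    -- key pointwise bound
    have hkey : ∀ x : EuclideanSpace ℝ (Fin 2),
        ‖(starRingEnd ℂ) (Ψ j (x - latt α)) * (Complex.exp (-Complex.I * (ε : ℂ) * ((b / 2 : ℝ) : ℂ) *
          (((latt α 0 - latt β 0) * (x 1 - latt β 1)
              - (latt α 1 - latt β 1) * (x 0 - latt β 0) : ℝ) : ℂ)) - 1) * Ψ k (x - latt β)‖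
          ≤ (2 * ε * b * A * B / (1 + ‖latt α - latt β‖) ^ m) * ((1 + ‖x - latt β‖) ^ 3)⁻¹ := by
      intro x
      have hpos3 : (0:ℝ) < (1 + ‖latt α - latt β‖) ^ m * (1 + ‖x - latt β‖) ^ 3 := by positivity
      have heq : (2 * ε * b * A * B / (1 + ‖latt α - latt β‖) ^ m) * ((1 + ‖x - latt β‖) ^ 3)⁻¹
          = 2 * ε * b * A * B / ((1 + ‖latt α - latt β‖) ^ m * (1 + ‖x - latt β‖) ^ 3) := by
        rw [← div_eq_mul_inv, div_div]
      rw [heq, le_div_iff₀ hpos3]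
      have hFn : ‖(starRingEnd ℂ) (Ψ j (x - latt α)) * (Complex.exp (-Complex.I * (ε : ℂ) * ((b / 2 : ℝ) : ℂ) *
          (((latt α 0 - latt β 0) * (x 1 - latt β 1)
              - (latt α 1 - latt β 1) * (x 0 - latt β 0) : ℝ) : ℂ)) - 1) * Ψ k (x - latt β)‖
          ≤ ‖Ψ j (x - latt α)‖ * (2 * ε * b * (‖latt α - latt β‖ * ‖x - latt β‖))
            * ‖Ψ k (x - latt β)‖ := by
        rw [norm_mul, norm_mul, RCLike.norm_conj]
        exact mul_le_mul_of_nonneg_right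
          (mul_le_mul_of_nonneg_left (hEb x) (norm_nonneg _)) (norm_nonneg _)
      have hPA : (1 + ‖x - latt α‖) ^ (m + 1) * ‖Ψ j (x - latt α)‖ ≤ A := hA j (x - latt α)
      have hQB : (1 + ‖x - latt β‖) ^ (m + 5) * ‖Ψ k (x - latt β)‖ ≤ B := hB k (x - latt β)
      have hDle : 1 + ‖latt α - latt β‖ ≤ (1 + ‖x - latt α‖) * (1 + ‖x - latt β‖) := by
        have h1 : ‖latt α - latt β‖ ≤ ‖x - latt β‖ + ‖x - latt α‖ := by
          have h2 : latt α - latt β = (x - latt β) - (x - latt α) := by abel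
          rw [h2]
          exact norm_sub_le _ _
        nlinarith [norm_nonneg (x - latt α), norm_nonneg (x - latt β)]
      have hUD : (1 + ‖latt α - latt β‖) ^ m * ‖latt α - latt β‖
          ≤ (1 + ‖latt α - latt β‖) ^ (m + 1) := by
        rw [pow_succ]
        exact mul_le_mul_of_nonneg_left (by linarith [norm_nonneg (latt α - latt β)])
          (by positivity)
      have hpow : (1 + ‖latt α - latt β‖) ^ (m + 1)
          ≤ (1 + ‖x - latt α‖) ^ (m + 1) * (1 + ‖x - latt β‖) ^ (m + 1) := by
        rw [← mul_pow]
        exact pow_le_pow_left₀ (by positivity) hDle _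
      have hVp : ‖x - latt β‖ * (1 + ‖x - latt β‖) ^ 3 ≤ (1 + ‖x - latt β‖) ^ 4 := by
        calc ‖x - latt β‖ * (1 + ‖x - latt β‖) ^ 3
            = (1 + ‖x - latt β‖) ^ 3 * ‖x - latt β‖ := mul_comm _ _
          _ ≤ (1 + ‖x - latt β‖) ^ 3 * (1 + ‖x - latt β‖) :=
              mul_le_mul_of_nonneg_left (by linarith [norm_nonneg (x - latt β)]) (by positivity)
          _ = (1 + ‖x - latt β‖) ^ 4 := (pow_succ _ _).symm
      calc ‖(starRingEnd ℂ) (Ψ j (x - latt α)) * (Complex.exp (-Complex.I * (ε : ℂ) * ((b / 2 : ℝ) : ℂ) *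
          (((latt α 0 - latt β 0) * (x 1 - latt β 1)
              - (latt α 1 - latt β 1) * (x 0 - latt β 0) : ℝ) : ℂ)) - 1) * Ψ k (x - latt β)‖ * ((1 + ‖latt α - latt β‖) ^ m * (1 + ‖x - latt β‖) ^ 3)
          ≤ (‖Ψ j (x - latt α)‖ * (2 * ε * b * (‖latt α - latt β‖ * ‖x - latt β‖))
              * ‖Ψ k (x - latt β)‖)
              * ((1 + ‖latt α - latt β‖) ^ m * (1 + ‖x - latt β‖) ^ 3) :=
            mul_le_mul_of_nonneg_right hFn (by positivity)
        _ = (2 * ε * b) * (((1 + ‖latt α - latt β‖) ^ m * ‖latt α - latt β‖)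
              * (‖Ψ j (x - latt α)‖ * (‖Ψ k (x - latt β)‖
                * (‖x - latt β‖ * (1 + ‖x - latt β‖) ^ 3)))) := by ring
        _ ≤ (2 * ε * b) * ((1 + ‖x - latt α‖) ^ (m + 1) * (1 + ‖x - latt β‖) ^ (m + 1)
              * (‖Ψ j (x - latt α)‖ * (‖Ψ k (x - latt β)‖
                * (1 + ‖x - latt β‖) ^ 4))) := by
            refine mul_le_mul_of_nonneg_left ?_ h2εb.le
            refine mul_le_mul (hUD.trans hpow) ?_ (by positivity) (by positivity)
            refine mul_le_mul_of_nonneg_left ?_ (norm_nonneg _)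
            exact mul_le_mul_of_nonneg_left hVp (norm_nonneg _)
        _ = (2 * ε * b) * (((1 + ‖x - latt α‖) ^ (m + 1) * ‖Ψ j (x - latt α)‖)
              * ((1 + ‖x - latt β‖) ^ (m + 5) * ‖Ψ k (x - latt β)‖)) := by ring
        _ ≤ (2 * ε * b) * (A * B) := by
            refine mul_le_mul_of_nonneg_left ?_ h2εb.le
            exact mul_le_mul hPA hQB (by positivity) hAnn
        _ = 2 * ε * b * A * B := by ring
    -- integrability
    have hint3 : Integrable (fun x : EuclideanSpace ℝ (Fin 2) => ((1 + ‖x - latt β‖) ^ 3)⁻¹) :=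
      aux_int3.comp_sub_right (latt β)
    have hcont0 : Continuous (fun x : EuclideanSpace ℝ (Fin 2) => (starRingEnd ℂ) (Ψ j (x - latt α)) * Ψ k (x - latt β)) := by
      exact (Complex.continuous_conj.comp ((Ψ j).continuous.comp
        (continuous_id.sub continuous_const))).mul
        ((Ψ k).continuous.comp (continuous_id.sub continuous_const))
    have hcontD : Continuous (fun x : EuclideanSpace ℝ (Fin 2) => (starRingEnd ℂ) (Ψ j (x - latt α)) * (Complex.exp (-Complex.I * (ε : ℂ) * ((b / 2 : ℝ) : ℂ) *
          (((latt α 0 - latt β 0) * (x 1 - latt β 1)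
              - (latt α 1 - latt β 1) * (x 0 - latt β 0) : ℝ) : ℂ)) - 1) * Ψ k (x - latt β)) := by
      have hc0 : Continuous (fun x : EuclideanSpace ℝ (Fin 2) => x 0) := by fun_prop
      have hc1 : Continuous (fun x : EuclideanSpace ℝ (Fin 2) => x 1) := by fun_prop
      have hr : Continuous (fun x : EuclideanSpace ℝ (Fin 2) =>
          ((latt α 0 - latt β 0) * (x 1 - latt β 1)
            - (latt α 1 - latt β 1) * (x 0 - latt β 0) : ℝ)) :=
        (continuous_const.mul (hc1.sub continuous_const)).sub
          (continuous_const.mul (hc0.sub continuous_const))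
      refine ((Complex.continuous_conj.comp ((Ψ j).continuous.comp
        (continuous_id.sub continuous_const))).mul ?_).mul
        ((Ψ k).continuous.comp (continuous_id.sub continuous_const))
      exact (Complex.continuous_exp.comp
        (continuous_const.mul (Complex.continuous_ofReal.comp hr))).sub continuous_const
    have hintF0 : Integrable (fun x : EuclideanSpace ℝ (Fin 2) => (starRingEnd ℂ) (Ψ j (x - latt α)) * Ψ k (x - latt β)) := by
      refine (hint3.const_mul (A * B)).mono' hcont0.aestronglyMeasurable ?_
      filter_upwards with x
      rw [norm_mul, RCLike.norm_conj]
      have hP : ‖Ψ j (x - latt α)‖ ≤ A := by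
        refine le_trans ?_ (hA j (x - latt α))
        exact le_mul_of_one_le_left (norm_nonneg _)
          (one_le_pow₀ (by linarith [norm_nonneg (x - latt α)]))
      have hQ : ‖Ψ k (x - latt β)‖ ≤ B * ((1 + ‖x - latt β‖) ^ 3)⁻¹ := by
        rw [← div_eq_mul_inv, le_div_iff₀ (by positivity)]
        refine le_trans ?_ (hB k (x - latt β))
        rw [mul_comm]
        exact mul_le_mul_of_nonneg_right
          (pow_le_pow_right₀ (by linarith [norm_nonneg (x - latt β)]) (by omega)) (norm_nonneg _)
      calc ‖Ψ j (x - latt α)‖ * ‖Ψ k (x - latt β)‖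
          ≤ A * (B * ((1 + ‖x - latt β‖) ^ 3)⁻¹) :=
            mul_le_mul hP hQ (norm_nonneg _) hAnn
        _ = A * B * ((1 + ‖x - latt β‖) ^ 3)⁻¹ := by ring
    have hintFD : Integrable (fun x : EuclideanSpace ℝ (Fin 2) => (starRingEnd ℂ) (Ψ j (x - latt α)) * (Complex.exp (-Complex.I * (ε : ℂ) * ((b / 2 : ℝ) : ℂ) *
          (((latt α 0 - latt β 0) * (x 1 - latt β 1)
              - (latt α 1 - latt β 1) * (x 0 - latt β 0) : ℝ) : ℂ)) - 1) * Ψ k (x - latt β)) := by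
      refine (hint3.const_mul (2 * ε * b * A * B / (1 + ‖latt α - latt β‖) ^ m)).mono'
        hcontD.aestronglyMeasurable ?_
      filter_upwards with x using hkey x
    -- the unperturbed integral vanishes
    have hortho0 := hortho j k α β
    rw [if_neg hab, mul_zero] at hortho0
    -- rewrite the full integral
    have hsum : (∫ x : EuclideanSpace ℝ (Fin 2), (starRingEnd ℂ) (Ψ j (x - latt α)) * Complex.exp (-Complex.I * (ε : ℂ) * ((b / 2 : ℝ) : ℂ) *
          (((latt α 0 - latt β 0) * (x 1 - latt β 1)
              - (latt α 1 - latt β 1) * (x 0 - latt β 0) : ℝ) : ℂ)) * Ψ k (x - latt β))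
        = ∫ x : EuclideanSpace ℝ (Fin 2), (starRingEnd ℂ) (Ψ j (x - latt α)) * (Complex.exp (-Complex.I * (ε : ℂ) * ((b / 2 : ℝ) : ℂ) *
          (((latt α 0 - latt β 0) * (x 1 - latt β 1)
              - (latt α 1 - latt β 1) * (x 0 - latt β 0) : ℝ) : ℂ)) - 1) * Ψ k (x - latt β) := by
      have hfe : (fun x : EuclideanSpace ℝ (Fin 2) => (starRingEnd ℂ) (Ψ j (x - latt α)) * Complex.exp (-Complex.I * (ε : ℂ) * ((b / 2 : ℝ) : ℂ) *
          (((latt α 0 - latt β 0) * (x 1 - latt β 1)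
              - (latt α 1 - latt β 1) * (x 0 - latt β 0) : ℝ) : ℂ)) * Ψ k (x - latt β))
          = fun x : EuclideanSpace ℝ (Fin 2) => ((starRingEnd ℂ) (Ψ j (x - latt α)) * Ψ k (x - latt β)) + ((starRingEnd ℂ) (Ψ j (x - latt α)) * (Complex.exp (-Complex.I * (ε : ℂ) * ((b / 2 : ℝ) : ℂ) *
          (((latt α 0 - latt β 0) * (x 1 - latt β 1)
              - (latt α 1 - latt β 1) * (x 0 - latt β 0) : ℝ) : ℂ)) - 1) * Ψ k (x - latt β)) := by
        funext x; ring
      rw [hfe, integral_add hintF0 hintFD, hortho0, zero_add]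
    have hph : -Complex.I * (ε : ℂ) * ((b / 2 : ℝ) : ℂ) *
          ((latt α 0 * latt β 1 - latt α 1 * latt β 0 : ℝ) : ℂ)
        = ((-(ε * (b / 2) * (latt α 0 * latt β 1 - latt α 1 * latt β 0)) : ℝ) : ℂ)
            * Complex.I := by
      push_cast; ring
    rw [hG, hph, norm_mul, Complex.norm_exp_ofReal_mul_I, one_mul, hsum]
    -- integral bound
    have hnormint : ‖∫ x : EuclideanSpace ℝ (Fin 2), (starRingEnd ℂ) (Ψ j (x - latt α)) * (Complex.exp (-Complex.I * (ε : ℂ) * ((b / 2 : ℝ) : ℂ) *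
          (((latt α 0 - latt β 0) * (x 1 - latt β 1)
              - (latt α 1 - latt β 1) * (x 0 - latt β 0) : ℝ) : ℂ)) - 1) * Ψ k (x - latt β)‖
        ≤ (2 * ε * b * A * B / (1 + ‖latt α - latt β‖) ^ m) * J := by
      refine (norm_integral_le_of_norm_le
        (hint3.const_mul (2 * ε * b * A * B / (1 + ‖latt α - latt β‖) ^ m))
        (Filter.Eventually.of_forall hkey)).trans ?_
      rw [integral_const_mul]
      rw [show (∫ x : EuclideanSpace ℝ (Fin 2), ((1 + ‖x - latt β‖) ^ 3)⁻¹) = J from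
        integral_sub_right_eq_self (fun x : EuclideanSpace ℝ (Fin 2) => ((1 + ‖x‖) ^ 3)⁻¹)
          (latt β)]
    -- conclude
    have hsqrt : Real.sqrt (1 + ‖latt α - latt β‖ ^ 2) ≤ 1 + ‖latt α - latt β‖ := by
      have h1 : 1 + ‖latt α - latt β‖ ^ 2 ≤ (1 + ‖latt α - latt β‖) ^ 2 := by
        nlinarith [norm_nonneg (latt α - latt β)]
      calc Real.sqrt (1 + ‖latt α - latt β‖ ^ 2)
          ≤ Real.sqrt ((1 + ‖latt α - latt β‖) ^ 2) := Real.sqrt_le_sqrt h1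
        _ = 1 + ‖latt α - latt β‖ := Real.sqrt_sq (by positivity)
    have hne : ((1:ℝ) + ‖latt α - latt β‖) ^ m ≠ 0 := by positivity
    calc Real.sqrt (1 + ‖latt α - latt β‖ ^ 2) ^ m
          * ‖∫ x : EuclideanSpace ℝ (Fin 2), (starRingEnd ℂ) (Ψ j (x - latt α)) * (Complex.exp (-Complex.I * (ε : ℂ) * ((b / 2 : ℝ) : ℂ) *
          (((latt α 0 - latt β 0) * (x 1 - latt β 1)
              - (latt α 1 - latt β 1) * (x 0 - latt β 0) : ℝ) : ℂ)) - 1) * Ψ k (x - latt β)‖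
        ≤ (1 + ‖latt α - latt β‖) ^ m
          * ((2 * ε * b * A * B / (1 + ‖latt α - latt β‖) ^ m) * J) :=
          mul_le_mul (pow_le_pow_left₀ (Real.sqrt_nonneg _) hsqrt m) hnormint
            (norm_nonneg _) (by positivity)
      _ = 2 * ε * b * A * B * J := by
          field_simp
      _ ≤ (2 * b * A * B * J + 1) * ε := by nlinarith
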